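/- Let S₀ : ℝ → ℝ be locally integrable with G₀ = ∫_ℝ exp(2∫_0^y S₀(z) dz) dy < ∞, and suppose the density f₀(x) = G₀^{−1} exp(2∫_0^x S₀(z) dz) is bounded on ℝ. Fix α ∈ ℝ and for n = 1, 2, … set S_n(x) = S₀(x) + α cos(n x), G_n = ∫_ℝ exp(2∫_0^y S_n(z) dz) dy and f_n(x) = G_n^{−1} exp(2∫_0^x S_n(z) dz). Then G_n < ∞ for every n, sup_{x ∈ ℝ} |f_n(x) − f₀(x)| → 0 as n → ∞, and consequently ∫_ℝ (f_n(x) − f₀(x))² f₀(x) dx → 0 as n → ∞. -/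

import Mathlib

open MeasureTheory Set Filter Topology

theorem stmt_16
    (S₀ : ℝ → ℝ) (hS₀ : LocallyIntegrable S₀)
    (hG₀ : Integrable (fun y => Real.exp (2 * ∫ z in (0:ℝ)..y, S₀ z)))
    (f₀ : ℝ → ℝ)
    (hf₀ : ∀ x, f₀ x =
      (∫ y, Real.exp (2 * ∫ z in (0:ℝ)..y, S₀ z))⁻¹ *
        Real.exp (2 * ∫ z in (0:ℝ)..x, S₀ z))
    (B : ℝ) (hB : ∀ x, f₀ x ≤ B)
    (α : ℝ)
    (S : ℕ → ℝ → ℝ) (hS : ∀ n x, S n x = S₀ x + α * Real.cos (n * x))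
    (f : ℕ → ℝ → ℝ)
    (hf : ∀ n x, f n x =
      (∫ y, Real.exp (2 * ∫ z in (0:ℝ)..y, S n z))⁻¹ *
        Real.exp (2 * ∫ z in (0:ℝ)..x, S n z)) :
    (∀ n : ℕ, 0 < n →
        Integrable (fun y => Real.exp (2 * ∫ z in (0:ℝ)..y, S n z))) ∧
      Tendsto (fun n : ℕ => ⨆ x : ℝ, |f n x - f₀ x|) atTop (𝓝 0) ∧
      Tendsto (fun n : ℕ => ∫ x, (f n x - f₀ x) ^ 2 * f₀ x) atTop (𝓝 0) := by
  -- notation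
  set g : ℝ → ℝ := fun y => Real.exp (2 * ∫ z in (0:ℝ)..y, S₀ z) with hgdef
  set G₀ : ℝ := ∫ y, g y with hG₀def
  set h : ℕ → ℝ → ℝ := fun n x => Real.exp (2 * α * Real.sin (n * x) / n) with hhdef
  set ε : ℕ → ℝ := fun n => 2 * |α| / n with hεdef
  set D : ℕ → ℝ := fun n => B * (Real.exp (2 * ε n) - 1) with hDdef
  have hgpos : ∀ x, 0 < g x := fun x => Real.exp_pos _
  have hgm : AEStronglyMeasurable g volume := hG₀.aestronglyMeasurable
  have hG₀pos : 0 < G₀ := by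
    rw [hG₀def, integral_pos_iff_support_of_nonneg (fun x => (hgpos x).le) hG₀]
    have : Function.support g = Set.univ := by
      ext x; simp [Function.mem_support, (hgpos x).ne']
    rw [this]
    simp
  have hSI : ∀ a b : ℝ, IntervalIntegrable S₀ volume a b := by
    intro a b
    rw [intervalIntegrable_iff']
    exact hS₀.integrableOn_isCompact isCompact_uIcc
  have hεnn : ∀ n : ℕ, 0 ≤ ε n := fun n => div_nonneg (by positivity) (Nat.cast_nonneg n)
  -- key decomposition
  have key : ∀ n : ℕ, 0 < n → ∀ x,
      Real.exp (2 * ∫ z in (0:ℝ)..x, S n z) = g x * h n x := by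
    intro n hn x
    have hn' : (n : ℝ) ≠ 0 := Nat.cast_ne_zero.mpr hn.ne'
    have hci : IntervalIntegrable (fun z => α * Real.cos ((n:ℝ) * z)) volume 0 x :=
      (continuous_const.mul (Real.continuous_cos.comp
        (continuous_const.mul continuous_id))).intervalIntegrable 0 x
    have hcos : ∫ z in (0:ℝ)..x, α * Real.cos ((n:ℝ) * z) = α * Real.sin ((n:ℝ) * x) / n := by
      rw [intervalIntegral.integral_const_mul,
        intervalIntegral.integral_comp_mul_left _ hn', mul_zero, integral_cos]
      simp [div_eq_inv_mul]
      ring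
    have hsum : ∫ z in (0:ℝ)..x, S n z
        = (∫ z in (0:ℝ)..x, S₀ z) + α * Real.sin ((n:ℝ) * x) / n := by
      have : (fun z => S n z) = fun z => S₀ z + α * Real.cos ((n:ℝ) * z) := by
        funext z; exact hS n z
      rw [this, intervalIntegral.integral_add (hSI 0 x) hci, hcos]
    rw [hsum, mul_add, Real.exp_add, hgdef, hhdef]
    ring_nf
  -- bounds on h
  have habs : ∀ n : ℕ, ∀ x : ℝ, |2 * α * Real.sin ((n:ℝ) * x) / n| ≤ ε n := by
    intro n x
    rw [abs_div, abs_mul, abs_mul, Nat.abs_cast, abs_two, hεdef]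
    rcases Nat.eq_zero_or_pos n with h0 | hpos
    · simp [h0]
    · have hnp : (0:ℝ) < n := Nat.cast_pos.mpr hpos
      refine (div_le_div_iff_of_pos_right hnp).mpr ?_
      exact mul_le_of_le_one_right (by positivity) (Real.abs_sin_le_one _)
  have hhub : ∀ n : ℕ, ∀ x, h n x ≤ Real.exp (ε n) :=
    fun n x => Real.exp_le_exp.mpr ((le_abs_self _).trans (habs n x))
  have hhlb : ∀ n : ℕ, ∀ x, Real.exp (-(ε n)) ≤ h n x :=
    fun n x => Real.exp_le_exp.mpr (neg_le_of_abs_le (habs n x))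
  have hhc : ∀ n : ℕ, Continuous (h n) :=
    fun n => Real.continuous_exp.comp (((continuous_const.mul
      (Real.continuous_sin.comp (continuous_const.mul continuous_id)))).div_const _)
  -- integrability of g * h n
  have hgh : ∀ n : ℕ, Integrable (fun y => g y * h n y) := by
    intro n
    have : (fun y => g y * h n y) = fun y => h n y * g y := by funext y; ring
    rw [this]
    exact hG₀.bdd_mul (c := Real.exp (ε n)) (hhc n).aestronglyMeasurable
      (Filter.Eventually.of_forall fun x => by
        rw [Real.norm_eq_abs, abs_of_pos (Real.exp_pos _)]
        exact hhub n x)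
  have hint : ∀ n : ℕ, 0 < n →
      Integrable (fun y => Real.exp (2 * ∫ z in (0:ℝ)..y, S n z)) := by
    intro n hn
    have : (fun y => Real.exp (2 * ∫ z in (0:ℝ)..y, S n z)) = fun y => g y * h n y := by
      funext y; exact key n hn y
    rw [this]
    exact hgh n
  -- bounds on Gₙ
  have hGnlb : ∀ n : ℕ, Real.exp (-(ε n)) * G₀ ≤ ∫ y, g y * h n y := by
    intro n
    have hpt : ∀ y, Real.exp (-(ε n)) * g y ≤ g y * h n y := by
      intro y
      rw [mul_comm (Real.exp (-(ε n)))]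
      exact mul_le_mul_of_nonneg_left (hhlb n y) (hgpos y).le
    calc Real.exp (-(ε n)) * G₀ = ∫ y, Real.exp (-(ε n)) * g y := by
          rw [hG₀def, integral_const_mul]
      _ ≤ ∫ y, g y * h n y := integral_mono (hG₀.const_mul _) (hgh n) hpt
  have hGnub : ∀ n : ℕ, (∫ y, g y * h n y) ≤ Real.exp (ε n) * G₀ := by
    intro n
    have hpt : ∀ y, g y * h n y ≤ Real.exp (ε n) * g y := by
      intro y
      rw [mul_comm (Real.exp (ε n))]
      exact mul_le_mul_of_nonneg_left (hhub n y) (hgpos y).le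
    calc (∫ y, g y * h n y) ≤ ∫ y, Real.exp (ε n) * g y :=
          integral_mono (hgh n) (hG₀.const_mul _) hpt
      _ = Real.exp (ε n) * G₀ := by rw [hG₀def, integral_const_mul]
  have hGnpos : ∀ n : ℕ, 0 < ∫ y, g y * h n y :=
    fun n => lt_of_lt_of_le (by positivity) (hGnlb n)
  -- formula for f n
  have hGneq : ∀ n : ℕ, 0 < n →
      (∫ y, Real.exp (2 * ∫ z in (0:ℝ)..y, S n z)) = ∫ y, g y * h n y := by
    intro n hn
    exact integral_congr_ae (Filter.Eventually.of_forall (key n hn))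
  have hfx : ∀ n : ℕ, 0 < n → ∀ x, f n x = (∫ y, g y * h n y)⁻¹ * (g x * h n x) := by
    intro n hn x
    rw [hf n x, key n hn x, hGneq n hn]
  have hf₀nn : ∀ x, 0 ≤ f₀ x := by
    intro x
    rw [hf₀ x]
    exact mul_nonneg (inv_nonneg.mpr hG₀pos.le) (Real.exp_pos _).le
  have hBnn : 0 ≤ B := le_trans (hf₀nn 0) (hB 0)
  -- exp identities
  have hexp2 : ∀ n : ℕ, Real.exp (ε n) * Real.exp (ε n) = Real.exp (2 * ε n) := by
    intro n; rw [← Real.exp_add]; ring_nf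
  have hexp2' : ∀ n : ℕ, Real.exp (-(ε n)) * Real.exp (-(ε n)) = Real.exp (-(2 * ε n)) := by
    intro n; rw [← Real.exp_add]; ring_nf
  -- the sandwich for f n
  have hu : ∀ n : ℕ, 0 < n → ∀ x, f n x ≤ Real.exp (2 * ε n) * f₀ x := by
    intro n hn x
    have h1 : g x * h n x ≤ g x * Real.exp (ε n) :=
      mul_le_mul_of_nonneg_left (hhub n x) (hgpos x).le
    have h2 : (∫ y, g y * h n y)⁻¹ ≤ (Real.exp (-(ε n)) * G₀)⁻¹ :=
      inv_anti₀ (by positivity) (hGnlb n)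
    calc f n x = (g x * h n x) * (∫ y, g y * h n y)⁻¹ := by rw [hfx n hn x]; ring
      _ ≤ (g x * Real.exp (ε n)) * (Real.exp (-(ε n)) * G₀)⁻¹ := by
          apply mul_le_mul h1 h2 (inv_nonneg.mpr (hGnpos n).le)
          positivity
      _ = Real.exp (2 * ε n) * f₀ x := by
          rw [hf₀ x, show Real.exp (2 * ∫ z in (0:ℝ)..x, S₀ z) = g x from rfl,
            mul_inv, Real.exp_neg, inv_inv, ← hexp2 n]
          ring
  have hl : ∀ n : ℕ, 0 < n → ∀ x, Real.exp (-(2 * ε n)) * f₀ x ≤ f n x := by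
    intro n hn x
    have h1 : g x * Real.exp (-(ε n)) ≤ g x * h n x :=
      mul_le_mul_of_nonneg_left (hhlb n x) (hgpos x).le
    have h2 : (Real.exp (ε n) * G₀)⁻¹ ≤ (∫ y, g y * h n y)⁻¹ :=
      inv_anti₀ (hGnpos n) (hGnub n)
    calc Real.exp (-(2 * ε n)) * f₀ x
        = (g x * Real.exp (-(ε n))) * (Real.exp (ε n) * G₀)⁻¹ := by
          rw [hf₀ x, show Real.exp (2 * ∫ z in (0:ℝ)..x, S₀ z) = g x from rfl,
            mul_inv, ← Real.exp_neg (ε n), ← hexp2' n]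
          ring
      _ ≤ (g x * h n x) * (∫ y, g y * h n y)⁻¹ := by
          apply mul_le_mul h1 h2 (by positivity)
          positivity
      _ = f n x := by rw [hfx n hn x]; ring
  -- pointwise bound
  have hbd : ∀ n : ℕ, 0 < n → ∀ x, |f n x - f₀ x| ≤ D n := by
    intro n hn x
    have h1 := hu n hn x
    have h2 := hl n hn x
    have h3 := hf₀nn x
    have h4 := hB x
    have e1 := Real.add_one_le_exp (2 * ε n)
    have e2 := Real.add_one_le_exp (-(2 * ε n))
    have e3 : (1:ℝ) ≤ Real.exp (2 * ε n) :=
      Real.one_le_exp (by positivity)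
    have hDn : D n = B * (Real.exp (2 * ε n) - 1) := rfl
    rw [abs_le, hDn]
    constructor
    · nlinarith [h2, mul_le_mul_of_nonneg_right
        (show 1 - Real.exp (-(2 * ε n)) ≤ Real.exp (2 * ε n) - 1 by linarith) h3,
        mul_le_mul_of_nonneg_left h4 (show (0:ℝ) ≤ Real.exp (2 * ε n) - 1 by linarith)]
    · nlinarith [h1, mul_le_mul_of_nonneg_left h4
        (show (0:ℝ) ≤ Real.exp (2 * ε n) - 1 by linarith)]
  have hDnn : ∀ n : ℕ, 0 ≤ D n := by
    intro n
    have h1 : (1:ℝ) ≤ Real.exp (2 * ε n) := Real.one_le_exp (by positivity)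
    have hDn : D n = B * (Real.exp (2 * ε n) - 1) := rfl
    rw [hDn]
    exact mul_nonneg hBnn (by linarith)
  -- D → 0
  have hDto : Tendsto D atTop (𝓝 0) := by
    have h1 : Tendsto (fun n : ℕ => 2 * ε n) atTop (𝓝 0) := by
      have := tendsto_const_div_atTop_nhds_zero_nat (4 * |α|)
      refine this.congr fun n => ?_
      rw [hεdef]
      ring
    have h2 : Tendsto (fun n : ℕ => Real.exp (2 * ε n) - 1) atTop (𝓝 0) := by
      have := (Real.continuous_exp.tendsto 0).comp h1
      simpa using this.sub_const 1
    simpa using h2.const_mul B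
  -- sup tendsto
  have hsup : Tendsto (fun n : ℕ => ⨆ x : ℝ, |f n x - f₀ x|) atTop (𝓝 0) := by
    apply tendsto_of_tendsto_of_tendsto_of_le_of_le' tendsto_const_nhds hDto
    · exact Filter.Eventually.of_forall fun n => Real.iSup_nonneg fun x => abs_nonneg _
    · filter_upwards [Filter.eventually_gt_atTop 0] with n hn
      exact ciSup_le fun x => hbd n hn x
  refine ⟨hint, hsup, ?_⟩
  -- integral tendsto
  have hf₀eq : f₀ = fun x => G₀⁻¹ * g x := funext hf₀
  have hf₀int : Integrable f₀ := by rw [hf₀eq]; exact hG₀.const_mul _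
  have hf₀sum : ∫ x, f₀ x = 1 := by
    rw [hf₀eq, integral_const_mul, ← hG₀def, inv_mul_cancel₀ hG₀pos.ne']
  have hfm : ∀ n : ℕ, 0 < n → AEStronglyMeasurable (f n) volume := by
    intro n hn
    have : f n = fun x => (∫ y, g y * h n y)⁻¹ * (g x * h n x) := funext (hfx n hn)
    rw [this]
    exact ((hgm.mul (hhc n).aestronglyMeasurable).const_mul _)
  have hsqbd : ∀ n : ℕ, 0 < n → ∀ x, (f n x - f₀ x) ^ 2 ≤ D n ^ 2 := by
    intro n hn x
    rw [← sq_abs]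
    exact pow_le_pow_left₀ (abs_nonneg _) (hbd n hn x) 2
  have hintsq : ∀ n : ℕ, 0 < n → Integrable (fun x => (f n x - f₀ x) ^ 2 * f₀ x) := by
    intro n hn
    refine hf₀int.bdd_mul (c := D n ^ 2) (((hfm n hn).sub hf₀int.aestronglyMeasurable).pow 2) ?_
    refine Filter.Eventually.of_forall fun x => ?_
    rw [Real.norm_eq_abs, abs_pow, ← abs_pow, abs_of_nonneg (sq_nonneg _)]
    exact hsqbd n hn x
  have hup : ∀ n : ℕ, 0 < n → (∫ x, (f n x - f₀ x) ^ 2 * f₀ x) ≤ D n ^ 2 := by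
    intro n hn
    calc (∫ x, (f n x - f₀ x) ^ 2 * f₀ x) ≤ ∫ x, D n ^ 2 * f₀ x :=
        integral_mono (hintsq n hn) (hf₀int.const_mul _)
          (fun x => mul_le_mul_of_nonneg_right (hsqbd n hn x) (hf₀nn x))
      _ = D n ^ 2 := by rw [integral_const_mul, hf₀sum, mul_one]
  have hlo : ∀ n : ℕ, 0 ≤ ∫ x, (f n x - f₀ x) ^ 2 * f₀ x :=
    fun n => integral_nonneg fun x => mul_nonneg (sq_nonneg _) (hf₀nn x)
  have hD2 : Tendsto (fun n : ℕ => D n ^ 2) atTop (𝓝 0) := by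
    have := hDto.pow 2
    simpa using this
  apply tendsto_of_tendsto_of_tendsto_of_le_of_le' tendsto_const_nhds hD2
  · exact Filter.Eventually.of_forall hlo
  · filter_upwards [Filter.eventually_gt_atTop 0] with n hn
    exact hup n hn
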